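/- Let ℱ be a nonempty family of finite simple graphs and let k ≥ 1 be an integer. Suppose there exist nonnegative integers a, C, A, c with a + C = A + c = k and c ≤ k/2 ≤ C such that both pairs (a, C) and (A, c) are ℱ-admissible. Then for every ε > 0 there exists N such that for all n ≥ N, Dist(n, Forb(ℱ)) ≤ (1/(2k) + ε) · binom(n,2). -/

import Mathlib

/-- A family of finite simple graphs, each presented on a vertex set `Fin n`. -/
abbrev GraphFam : Type := Set ((n : ℕ) × SimpleGraph (Fin n))

/-- The edit distance between two simple graphs on the same finite vertex set. -/
noncomputable def editDist {V : Type} [Fintype V] (G G' : SimpleGraph V) : ℕ :=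
  (symmDiff G.edgeSet G'.edgeSet).ncard

/-- A graph `G` is `ℱ`-free if no member of `ℱ` embeds into `G`. -/
def FamFree (ℱ : GraphFam) {V : Type} (G : SimpleGraph V) : Prop :=
  ∀ F ∈ ℱ, ¬ Nonempty (F.2 ↪g G)

/-- `Dist(G, Forb(ℱ))`: minimum edit distance from `G` to an `ℱ`-free graph on
the same vertex set. -/
noncomputable def distFam (ℱ : GraphFam) {V : Type} [Fintype V] (G : SimpleGraph V) : ℕ :=
  sInf { d | ∃ G' : SimpleGraph V, FamFree ℱ G' ∧ d = editDist G G' }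

/-- `Dist(n, Forb(ℱ))`: maximum of `Dist(G, Forb(ℱ))` over `n`-vertex graphs. -/
noncomputable def distFamN (ℱ : GraphFam) (n : ℕ) : ℕ :=
  sSup { d | ∃ G : SimpleGraph (Fin n), d = distFam ℱ G }

/-- `F` admits a partition of its vertex set into `a` independent sets and `c`
cliques (parts may be empty). -/
def HasPartition {V : Type} (F : SimpleGraph V) (a c : ℕ) : Prop :=
  ∃ φ : V → Fin a ⊕ Fin c,
    (∀ (i : Fin a) (u v : V), φ u = Sum.inl i → φ v = Sum.inl i → ¬ F.Adj u v) ∧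
    (∀ (j : Fin c) (u v : V), φ u = Sum.inr j → φ v = Sum.inr j → u ≠ v → F.Adj u v)

/-- The pair `(a,c)` is `ℱ`-admissible if no `F ∈ ℱ` admits a partition of its
vertex set into `a` independent sets and `c` cliques. -/
def Admissible (ℱ : GraphFam) (a c : ℕ) : Prop :=
  ∀ F ∈ ℱ, ¬ HasPartition F.2 a c

open Finset

section Aux

variable {n k : ℕ}

def pg (G : SimpleGraph (Fin n)) (φ : Fin n → Fin k) (t : ℕ) : SimpleGraph (Fin n) where
  Adj u v := u ≠ v ∧ ((φ u = φ v ∧ t ≤ (φ u : ℕ)) ∨ (φ u ≠ φ v ∧ G.Adj u v))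
  symm := by
    constructor
    rintro u v ⟨h1, h2⟩
    refine ⟨h1.symm, ?_⟩
    rcases h2 with ⟨e, le⟩ | ⟨ne, adj⟩
    · exact Or.inl ⟨e.symm, e ▸ le⟩
    · exact Or.inr ⟨fun h => ne h.symm, adj.symm⟩
  loopless := ⟨fun u h => h.1 rfl⟩

lemma pg_adj (G : SimpleGraph (Fin n)) (φ : Fin n → Fin k) (t : ℕ) {u v : Fin n} :
    (pg G φ t).Adj u v ↔
      u ≠ v ∧ ((φ u = φ v ∧ t ≤ (φ u : ℕ)) ∨ (φ u ≠ φ v ∧ G.Adj u v)) := Iff.rfl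

instance (G : SimpleGraph (Fin n)) [DecidableRel G.Adj] (φ : Fin n → Fin k) (t : ℕ) :
    DecidableRel (pg G φ t).Adj := fun u v =>
  inferInstanceAs (Decidable (u ≠ v ∧ ((φ u = φ v ∧ t ≤ (φ u : ℕ)) ∨ (φ u ≠ φ v ∧ G.Adj u v))))

lemma pg_free (ℱ : GraphFam) (G : SimpleGraph (Fin n)) (φ : Fin n → Fin k)
    {t t' : ℕ} (htt : t + t' = k) (hadm : Admissible ℱ t t') :
    FamFree ℱ (pg G φ t) := by
  rintro F hF ⟨e⟩
  refine hadm F hF ?_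
  refine ⟨fun v => if h : (φ (e v) : ℕ) < t then Sum.inl ⟨_, h⟩
    else Sum.inr ⟨(φ (e v) : ℕ) - t, by have := (φ (e v)).isLt; omega⟩, ?_, ?_⟩
  · intro i u v hu hv hadj
    dsimp only at hu hv
    by_cases hcu : (φ (e u) : ℕ) < t
    case neg => rw [dif_neg hcu] at hu; exact Sum.inr_ne_inl hu
    by_cases hcv : (φ (e v) : ℕ) < t
    case neg => rw [dif_neg hcv] at hv; exact (Sum.inr_ne_inl hv).elim
    rw [dif_pos hcu] at hu
    rw [dif_pos hcv] at hv
    have hui : (φ (e u) : ℕ) = (i : ℕ) := congrArg Fin.val (Sum.inl.inj hu)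
    have hvi : (φ (e v) : ℕ) = (i : ℕ) := congrArg Fin.val (Sum.inl.inj hv)
    have heq : φ (e u) = φ (e v) := Fin.ext (hui.trans hvi.symm)
    have hadj' : (pg G φ t).Adj (e u) (e v) := e.map_adj_iff.mpr hadj
    rcases hadj'.2 with ⟨_, hle⟩ | ⟨hne, _⟩
    · omega
    · exact hne heq
  · intro j u v hu hv huv
    dsimp only at hu hv
    by_cases hcu : (φ (e u) : ℕ) < t
    case pos => rw [dif_pos hcu] at hu; exact (Sum.inl_ne_inr hu).elim
    by_cases hcv : (φ (e v) : ℕ) < t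
    case pos => rw [dif_pos hcv] at hv; exact (Sum.inl_ne_inr hv).elim
    rw [dif_neg hcu] at hu
    rw [dif_neg hcv] at hv
    have hui : (φ (e u) : ℕ) - t = (j : ℕ) := congrArg Fin.val (Sum.inr.inj hu)
    have hvi : (φ (e v) : ℕ) - t = (j : ℕ) := congrArg Fin.val (Sum.inr.inj hv)
    have heq : φ (e u) = φ (e v) := Fin.ext (by omega)
    have hne : e u ≠ e v := fun h => huv (e.injective h)
    exact e.map_adj_iff.mp ⟨hne, Or.inl ⟨heq, not_lt.mp hcu⟩⟩

lemma editDist_eq_card {V : Type} [Fintype V] [DecidableEq V] (G G' : SimpleGraph V)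
    [DecidableRel G.Adj] [DecidableRel G'.Adj] :
    editDist G G' = (symmDiff G.edgeFinset G'.edgeFinset).card := by
  rw [editDist, ← SimpleGraph.coe_edgeFinset, ← SimpleGraph.coe_edgeFinset,
    ← Finset.coe_symmDiff, Set.ncard_coe_finset]


variable {n k : ℕ}

def funEquiv {u v : Fin n} (huv : u ≠ v) (p : Fin k → Prop) [DecidablePred p] :
    {φ : Fin n → Fin k // φ u = φ v ∧ p (φ u)} ≃
      {i : Fin k // p i} × ({w : Fin n // w ≠ u ∧ w ≠ v} → Fin k) where
  toFun φ := (⟨φ.1 u, φ.2.2⟩, fun w => φ.1 w.1)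
  invFun x := ⟨fun y => if h : y = u ∨ y = v then x.1.1 else x.2 ⟨y, not_or.mp h⟩,
    by
      constructor
      · beta_reduce
        rw [dif_pos (Or.inl rfl), dif_pos (Or.inr rfl)]
      · beta_reduce
        rw [dif_pos (Or.inl rfl)]; exact x.1.2⟩
  left_inv φ := by
    apply Subtype.ext
    funext y
    dsimp only
    by_cases h : y = u ∨ y = v
    · rw [dif_pos h]
      rcases h with rfl | rfl
      · rfl
      · exact φ.2.1
    · rw [dif_neg h]
  right_inv x := by
    refine Prod.ext ?_ ?_
    · exact Subtype.ext (dif_pos (Or.inl rfl))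
    · funext w
      exact dif_neg (not_or.mpr w.2)

lemma card_filter_funs (hn : 2 ≤ n) {u v : Fin n} (huv : u ≠ v) (p : Fin k → Prop)
    [DecidablePred p] :
    (univ.filter fun φ : Fin n → Fin k => φ u = φ v ∧ p (φ u)).card
      = (univ.filter p).card * k ^ (n - 2) := by
  classical
  have h1 : Fintype.card {φ : Fin n → Fin k // φ u = φ v ∧ p (φ u)}
      = Fintype.card ({i : Fin k // p i} × ({w : Fin n // w ≠ u ∧ w ≠ v} → Fin k)) :=
    Fintype.card_congr (funEquiv huv p)
  have h2 : Fintype.card {w : Fin n // w ≠ u ∧ w ≠ v} = n - 2 := by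
    rw [Fintype.card_subtype]
    have h3 : (univ.filter fun w : Fin n => w ≠ u ∧ w ≠ v) = univ \ {u, v} := by
      ext w; simp [not_or]
    rw [h3, card_sdiff_of_subset (subset_univ _), card_univ, Fintype.card_fin, card_pair huv]
  rw [Fintype.card_subtype, Fintype.card_prod, Fintype.card_fun, Fintype.card_subtype,
    Fintype.card_fin, h2] at h1
  exact h1

lemma card_lt_t {t : ℕ} (ht : t ≤ k) :
    (univ.filter fun i : Fin k => (i : ℕ) < t).card = t := by
  have h : (univ.filter fun i : Fin k => (i : ℕ) < t)
      = (Finset.range t).attachFin (fun m hm => lt_of_lt_of_le (mem_range.mp hm) ht) := by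
    ext i; simp [Finset.mem_attachFin]
  rw [h, Finset.card_attachFin, Finset.card_range]

lemma card_ge_t {t : ℕ} (ht : t ≤ k) :
    (univ.filter fun i : Fin k => t ≤ (i : ℕ)).card = k - t := by
  have h := Finset.card_filter_add_card_filter_not
    (s := (univ : Finset (Fin k))) (p := fun i : Fin k => (i : ℕ) < t)
  rw [card_lt_t ht, card_univ, Fintype.card_fin] at h
  have h2 : (univ.filter fun i : Fin k => ¬ (i : ℕ) < t)
      = univ.filter fun i : Fin k => t ≤ (i : ℕ) := by
    simp [not_lt]
  rw [h2] at h
  omega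

def nonedges (G : SimpleGraph (Fin n)) [DecidableRel G.Adj] : Finset (Sym2 (Fin n)) :=
  univ.filter fun e => ¬ e.IsDiag ∧ e ∉ G.edgeFinset

lemma card_edge_add_nonedges (G : SimpleGraph (Fin n)) [DecidableRel G.Adj] :
    G.edgeFinset.card + (nonedges G).card = n.choose 2 := by
  classical
  have h := Finset.card_filter_add_card_filter_not
    (s := univ.filter fun e : Sym2 (Fin n) => ¬ e.IsDiag) (p := fun e => e ∈ G.edgeFinset)
  have h1 : ((univ.filter fun e : Sym2 (Fin n) => ¬ e.IsDiag).filter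
      fun e => e ∈ G.edgeFinset) = G.edgeFinset := by
    ext e
    simp only [mem_filter, mem_univ, true_and, and_iff_right_iff_imp]
    intro he
    exact G.not_isDiag_of_mem_edgeSet (SimpleGraph.mem_edgeFinset.mp he)
  have h2 : ((univ.filter fun e : Sym2 (Fin n) => ¬ e.IsDiag).filter
      fun e => ¬ e ∈ G.edgeFinset) = nonedges G := by
    rw [Finset.filter_filter]; rfl
  have h3 : (univ.filter fun e : Sym2 (Fin n) => ¬ e.IsDiag).card = n.choose 2 := by
    rw [← Fintype.card_subtype, Sym2.card_subtype_not_diag, Fintype.card_fin]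
  rw [h1, h2, h3] at h
  exact h


lemma sum_bad {n k : ℕ} (G : SimpleGraph (Fin n)) [DecidableRel G.Adj] (hn : 2 ≤ n) {t : ℕ}
    (ht : t ≤ k) :
    ∑ φ : Fin n → Fin k, (symmDiff G.edgeFinset (pg G φ t).edgeFinset).card
      = (t * G.edgeFinset.card + (k - t) * (nonedges G).card) * k ^ (n - 2) := by
  classical
  have step1 : ∀ φ : Fin n → Fin k, (symmDiff G.edgeFinset (pg G φ t).edgeFinset).card
      = ∑ e : Sym2 (Fin n), if e ∈ symmDiff G.edgeFinset (pg G φ t).edgeFinset then 1 else 0 := by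
    intro φ
    rw [← Finset.card_filter]
    congr 1
    exact (Finset.filter_univ_mem _).symm
  have percard : ∀ e : Sym2 (Fin n), (univ.filter fun φ : Fin n → Fin k =>
      e ∈ symmDiff G.edgeFinset (pg G φ t).edgeFinset).card
      = (if e ∈ G.edgeFinset then t else if e.IsDiag then 0 else (k - t)) * k ^ (n - 2) := by
    intro e
    induction e using Sym2.ind with
    | _ u v =>
      by_cases huv : u = v
      · subst huv
        have hE : s(u, u) ∉ G.edgeFinset := by
          simp [SimpleGraph.mem_edgeFinset]
        have hempty : (univ.filter fun φ : Fin n → Fin k =>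
            s(u, u) ∈ symmDiff G.edgeFinset (pg G φ t).edgeFinset) = ∅ := by
          rw [Finset.filter_eq_empty_iff]
          intro φ _
          simp [Finset.mem_symmDiff, SimpleGraph.mem_edgeFinset, SimpleGraph.mem_edgeSet, pg_adj]
        rw [hempty]
        simp [hE, Sym2.mk_isDiag_iff]
      · have hmem : ∀ φ : Fin n → Fin k,
            (s(u, v) ∈ symmDiff G.edgeFinset (pg G φ t).edgeFinset)
            ↔ (φ u = φ v ∧ if G.Adj u v then ((φ u : ℕ) < t) else (t ≤ (φ u : ℕ))) := by
          intro φ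
          rw [Finset.mem_symmDiff]
          simp only [SimpleGraph.mem_edgeFinset, SimpleGraph.mem_edgeSet, pg_adj]
          by_cases hadj : G.Adj u v <;> by_cases hfeq : φ u = φ v <;>
            simp [hadj, hfeq, huv, not_lt]
        rw [Finset.filter_congr (fun φ _ => hmem φ)]
        by_cases hadj : G.Adj u v
        · have h4 : (univ.filter fun φ : Fin n → Fin k =>
              φ u = φ v ∧ if G.Adj u v then ((φ u : ℕ) < t) else (t ≤ (φ u : ℕ)))
              = univ.filter fun φ : Fin n → Fin k => φ u = φ v ∧ ((φ u : ℕ) < t) := by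
            simp only [if_pos hadj]
          rw [h4, card_filter_funs hn huv (fun i : Fin k => (i : ℕ) < t), card_lt_t ht]
          have hE : s(u, v) ∈ G.edgeFinset := by
            simpa [SimpleGraph.mem_edgeFinset, SimpleGraph.mem_edgeSet] using hadj
          rw [if_pos hE]
        · have h4 : (univ.filter fun φ : Fin n → Fin k =>
              φ u = φ v ∧ if G.Adj u v then ((φ u : ℕ) < t) else (t ≤ (φ u : ℕ)))
              = univ.filter fun φ : Fin n → Fin k => φ u = φ v ∧ (t ≤ (φ u : ℕ)) := by
            simp only [if_neg hadj]
          rw [h4, card_filter_funs hn huv (fun i : Fin k => t ≤ (i : ℕ)), card_ge_t ht]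
          have hE : s(u, v) ∉ G.edgeFinset := by
            simpa [SimpleGraph.mem_edgeFinset, SimpleGraph.mem_edgeSet] using hadj
          have hd : ¬ (Sym2.IsDiag s(u, v)) := by simpa [Sym2.mk_isDiag_iff] using huv
          rw [if_neg hE, if_neg hd]
  calc ∑ φ : Fin n → Fin k, (symmDiff G.edgeFinset (pg G φ t).edgeFinset).card
      = ∑ φ : Fin n → Fin k, ∑ e : Sym2 (Fin n),
          if e ∈ symmDiff G.edgeFinset (pg G φ t).edgeFinset then 1 else 0 :=
        Finset.sum_congr rfl fun φ _ => step1 φ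
    _ = ∑ e : Sym2 (Fin n), ∑ φ : Fin n → Fin k,
          if e ∈ symmDiff G.edgeFinset (pg G φ t).edgeFinset then 1 else 0 := Finset.sum_comm
    _ = ∑ e : Sym2 (Fin n), (univ.filter fun φ : Fin n → Fin k =>
          e ∈ symmDiff G.edgeFinset (pg G φ t).edgeFinset).card :=
        Finset.sum_congr rfl fun e _ => (Finset.card_filter _ _).symm
    _ = ∑ e : Sym2 (Fin n),
          (if e ∈ G.edgeFinset then t else if e.IsDiag then 0 else (k - t)) * k ^ (n - 2) :=
        Finset.sum_congr rfl fun e _ => percard e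
    _ = (t * G.edgeFinset.card + (k - t) * (nonedges G).card) * k ^ (n - 2) := by
        rw [← Finset.sum_mul]
        congr 1
        rw [← Finset.sum_filter_add_sum_filter_not univ
          (fun e : Sym2 (Fin n) => e ∈ G.edgeFinset)]
        congr 1
        · rw [Finset.filter_univ_mem,
            Finset.sum_congr rfl (fun e he => if_pos he), Finset.sum_const, smul_eq_mul, mul_comm]
        · have hc : ∀ e ∈ univ.filter (fun e : Sym2 (Fin n) => ¬ e ∈ G.edgeFinset),
              (if e ∈ G.edgeFinset then t else if e.IsDiag then 0 else (k - t))
                = if ¬ e.IsDiag then (k - t) else 0 := by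
            intro e he
            rw [if_neg (Finset.mem_filter.mp he).2]
            by_cases hd : e.IsDiag <;> simp [hd]
          rw [Finset.sum_congr rfl hc, Finset.sum_ite, Finset.sum_const_zero, add_zero,
            Finset.sum_const, smul_eq_mul, Finset.filter_filter]
          have h5 : (univ.filter fun e : Sym2 (Fin n) => (¬ e ∈ G.edgeFinset) ∧ ¬ e.IsDiag)
              = nonedges G := by
            ext e; simp [nonedges, and_comm]
          rw [h5, mul_comm]

lemma key {n k : ℕ} (ℱ : GraphFam) (hk : 1 ≤ k) {a C A c : ℕ} (haC : a + C = k)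
    (hAc : A + c = k) (hac : a ≤ C) (hca : c ≤ A)
    (hadm1 : Admissible ℱ a C) (hadm2 : Admissible ℱ A c)
    (hn : 2 ≤ n) (G : SimpleGraph (Fin n)) :
    2 * k * distFam ℱ G ≤ n.choose 2 := by
  classical
  have hmm : G.edgeFinset.card + (nonedges G).card = n.choose 2 := card_edge_add_nonedges G
  set m := G.edgeFinset.card with hm
  set mb := (nonedges G).card with hmb
  obtain ⟨t, t', htt', hadm, hineq⟩ :
      ∃ t t' : ℕ, t + t' = k ∧ Admissible ℱ t t'
        ∧ 2 * (t * m + (k - t) * mb) ≤ k * (m + mb) := by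
    rcases le_total mb m with h | h
    · refine ⟨a, C, haC, hadm1, ?_⟩
      have hgap : a * m + C * mb ≤ a * mb + C * m := mul_add_mul_le_mul_add_mul hac h
      have hC' : k - a = C := by omega
      rw [hC']
      nlinarith [hgap]
    · refine ⟨A, c, hAc, hadm2, ?_⟩
      have hgap : c * mb + A * m ≤ c * m + A * mb := mul_add_mul_le_mul_add_mul hca h
      have hc' : k - A = c := by omega
      rw [hc']
      nlinarith [hgap]
  have ht : t ≤ k := by omega
  have hkne : Nonempty (Fin k) := ⟨⟨0, hk⟩⟩
  obtain ⟨φ₀, -, hφ₀⟩ := Finset.exists_min_image (univ : Finset (Fin n → Fin k))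
    (fun φ => (symmDiff G.edgeFinset (pg G φ t).edgeFinset).card) Finset.univ_nonempty
  set B := (symmDiff G.edgeFinset (pg G φ₀ t).edgeFinset).card with hB
  have hsum := sum_bad G hn ht
  have h1 : k ^ n * B ≤ (t * m + (k - t) * mb) * k ^ (n - 2) := by
    calc k ^ n * B = ∑ _φ : Fin n → Fin k, B := by
          rw [Finset.sum_const, card_univ, Fintype.card_fun, Fintype.card_fin, Fintype.card_fin, smul_eq_mul]
      _ ≤ ∑ φ : Fin n → Fin k, (symmDiff G.edgeFinset (pg G φ t).edgeFinset).card :=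
          Finset.sum_le_sum fun φ _ => hφ₀ φ (mem_univ φ)
      _ = _ := hsum
  have e1 : k ^ n = k ^ (n - 1) * k := by
    rw [← pow_succ]; congr 1; omega
  have e2 : k ^ (n - 1) = k ^ (n - 2) * k := by
    rw [← pow_succ]; congr 1; omega
  have h2 : k ^ (n - 1) * (2 * k * B) ≤ k ^ (n - 1) * (m + mb) := by
    calc k ^ (n - 1) * (2 * k * B) = 2 * (k ^ n * B) := by rw [e1]; ring
      _ ≤ 2 * ((t * m + (k - t) * mb) * k ^ (n - 2)) := by omega
      _ = (2 * (t * m + (k - t) * mb)) * k ^ (n - 2) := by ring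
      _ ≤ (k * (m + mb)) * k ^ (n - 2) := Nat.mul_le_mul_right _ hineq
      _ = k ^ (n - 1) * (m + mb) := by rw [e2]; ring
  have hpow : 0 < k ^ (n - 1) := Nat.pow_pos hk
  have h3 : 2 * k * B ≤ m + mb := Nat.le_of_mul_le_mul_left h2 hpow
  have hfree : FamFree ℱ (pg G φ₀ t) := pg_free ℱ G φ₀ htt' hadm
  have hdist : distFam ℱ G ≤ B := by
    apply Nat.sInf_le
    exact ⟨pg G φ₀ t, hfree, (editDist_eq_card G _).symm⟩
  calc 2 * k * distFam ℱ G ≤ 2 * k * B := Nat.mul_le_mul_left _ hdist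
    _ ≤ m + mb := h3
    _ = n.choose 2 := hmm

theorem symmetric_bound (ℱ : GraphFam) (hne : ℱ.Nonempty) (k : ℕ) (hk : 1 ≤ k)
    (a C A c : ℕ) (haC : a + C = k) (hAc : A + c = k)
    (hc : (c : ℝ) ≤ (k : ℝ) / 2) (hC : (k : ℝ) / 2 ≤ (C : ℝ))
    (hadm1 : Admissible ℱ a C) (hadm2 : Admissible ℱ A c) :
    ∀ ε : ℝ, 0 < ε → ∃ N : ℕ, ∀ n : ℕ, N ≤ n →
      (distFamN ℱ n : ℝ) ≤ (1 / (2 * (k : ℝ)) + ε) * (n.choose 2 : ℝ) := by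
  intro ε hε
  classical
  refine ⟨2, fun n hn => ?_⟩
  have hac : a ≤ C := by
    have h2C : (k : ℝ) ≤ 2 * C := by linarith
    have h2C' : k ≤ 2 * C := by exact_mod_cast h2C
    omega
  have hca : c ≤ A := by
    have h2c : (2 * c : ℝ) ≤ k := by linarith
    have h2c' : 2 * c ≤ k := by exact_mod_cast h2c
    omega
  have hSup : distFamN ℱ n ≤ n.choose 2 / (2 * k) := by
    apply csSup_le
    · exact ⟨distFam ℱ (⊥ : SimpleGraph (Fin n)), ⊥, rfl⟩
    · rintro d ⟨G, rfl⟩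
      have hkey := key ℱ hk haC hAc hac hca hadm1 hadm2 hn G
      have h2k : 0 < 2 * k := by omega
      refine (Nat.le_div_iff_mul_le h2k).mpr ?_
      calc distFam ℱ G * (2 * k) = 2 * k * distFam ℱ G := by ring
        _ ≤ n.choose 2 := hkey
  have h1 : ((distFamN ℱ n : ℕ) : ℝ) ≤ ((n.choose 2 / (2 * k) : ℕ) : ℝ) := Nat.cast_le.mpr hSup
  have h2 : ((n.choose 2 / (2 * k) : ℕ) : ℝ) ≤ (n.choose 2 : ℝ) / ((2 * k : ℕ) : ℝ) :=
    Nat.cast_div_le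
  have h3 : ((2 * k : ℕ) : ℝ) = 2 * (k : ℝ) := by push_cast; ring
  have hk0 : (0 : ℝ) < 2 * (k : ℝ) := by
    have : (1 : ℝ) ≤ (k : ℝ) := by exact_mod_cast hk
    linarith
  calc (distFamN ℱ n : ℝ) ≤ (n.choose 2 : ℝ) / (2 * (k : ℝ)) := by
        rw [← h3]; exact h1.trans h2
    _ = (1 / (2 * (k : ℝ))) * (n.choose 2 : ℝ) := by
        field_simp
    _ ≤ (1 / (2 * (k : ℝ)) + ε) * (n.choose 2 : ℝ) := by
        apply mul_le_mul_of_nonneg_right _ (by positivity)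
        linarith
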